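/- Let N ≥ 1, λ, μ > 0, β ∈ (0, λ), T ≥ 0 and C̃ > 0. Let ψ_T : ℝ^N → ℝ be bounded and continuously differentiable with bounded gradient, and let w : [T,∞) → C^b(ℝ^N) be continuous with ∥w(s)∥_∞ ≤ C̃ e^{−β(s−T)} for all s ≥ T. Define ψ(t)(x) = (e^{(t−T)(Δ−λI)}ψ_T)(x) + μ ∫_T^t (e^{(s−T)(Δ−λI)} w(t−s+T))(x) ds for t > T, let C_N be a constant such that ∥∇(e^{s(Δ−λI)}w)∥_∞ ≤ C_N s^{−1/2} e^{−λs}∥w∥_∞ for all s > 0 and all bounded continuous w, and set C₃ = ∫₀^∞ s^{−1/2} e^{−(λ−β)s} ds. Then ∥∇ψ(t)∥_∞ ≤ e^{−β(t−T)} ( ∥∇ψ_T∥_∞ + μ C̃ C_N C₃ ) for all t > T. -/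

import Mathlib

open MeasureTheory
open scoped BoundedContinuousFunction

noncomputable section

/-- The damped heat semigroup `e^{t(Δ-ρI)}` applied to `w`. -/
def dampedHeat (N : ℕ) (ρ t : ℝ) (w : EuclideanSpace ℝ (Fin N) → ℝ)
    (x : EuclideanSpace ℝ (Fin N)) : ℝ :=
  ∫ y : EuclideanSpace ℝ (Fin N),
    (4 * Real.pi * t) ^ (-(N : ℝ) / 2) * Real.exp (-‖x - y‖ ^ 2 / (4 * t) - ρ * t) * w y

open Real

namespace Aux13

variable {N : ℕ}

local notation "E" => EuclideanSpace ℝ (Fin N)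

/-- heat kernel -/
def K (N : ℕ) (t : ℝ) (z : EuclideanSpace ℝ (Fin N)) : ℝ :=
  (4 * π * t) ^ (-(N : ℝ) / 2) * rexp (-‖z‖ ^ 2 / (4 * t))

lemma K_pos {t : ℝ} (ht : 0 < t) (z : E) : 0 < K N t z := by
  have : (0:ℝ) < 4 * π * t := by positivity
  exact mul_pos (rpow_pos_of_pos this _) (exp_pos _)

lemma K_eq {t : ℝ} (ht : 0 < t) (z : E) :
    K N t z = (4 * π * t) ^ (-(N : ℝ) / 2) * rexp (-(4 * t)⁻¹ * ‖z‖ ^ 2) := by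
  rw [K]; congr 1; congr 1; field_simp

lemma K_continuous {t : ℝ} (ht : 0 < t) : Continuous (K N t) := by
  apply Continuous.mul continuous_const
  exact (Continuous.div_const (continuous_norm.pow 2).neg _).rexp

lemma integrable_gauss {b : ℝ} (hb : 0 < b) :
    Integrable (fun z : E => rexp (-b * ‖z‖ ^ 2)) := by
  have h := GaussianFourier.integrable_cexp_neg_mul_sq_norm_add (V := E)
      (b := (b:ℂ)) (by simpa using hb) 0 0
  have := h.norm
  refine this.congr ?_
  filter_upwards with z
  have : ‖Complex.exp (-(b:ℂ) * ‖z‖ ^ 2 + 0 * (inner ℝ (0:E) z : ℝ))‖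
      = rexp (-b * ‖z‖ ^ 2) := by
    rw [Complex.norm_exp]
    congr 1
    push_cast
    simp [← Complex.ofReal_pow]
  rw [this]

lemma integrable_K {t : ℝ} (ht : 0 < t) : Integrable (K N t) := by
  have hb : (0:ℝ) < (4*t)⁻¹ := by positivity
  have := (integrable_gauss (N := N) hb).const_mul ((4 * π * t) ^ (-(N : ℝ) / 2))
  refine this.congr ?_
  filter_upwards with z
  rw [K_eq ht]

lemma integral_K {t : ℝ} (ht : 0 < t) : ∫ z : E, K N t z = 1 := by
  have hb : (0:ℝ) < (4*t)⁻¹ := by positivity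
  have h1 : ∫ z : E, K N t z
      = (4 * π * t) ^ (-(N : ℝ) / 2) * ∫ z : E, rexp (-(4*t)⁻¹ * ‖z‖ ^ 2) := by
    rw [← integral_const_mul]
    exact integral_congr_ae (Filter.Eventually.of_forall fun z => K_eq ht z)
  rw [h1, GaussianFourier.integral_rexp_neg_mul_sq_norm hb]
  have h2 : π / (4*t)⁻¹ = 4 * π * t := by field_simp
  rw [h2, finrank_euclideanSpace_fin]
  have hpos : (0:ℝ) < 4 * π * t := by positivity
  rw [← Real.rpow_add hpos, neg_div, neg_add_cancel, rpow_zero]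


lemma self_mul_exp_le {u : ℝ} (hu : 0 ≤ u) : u * rexp (-(u ^ 2 / 2)) ≤ 1 := by
  have h1 : u ≤ rexp (u ^ 2 / 2) := by
    have h2 : u ≤ u ^ 2 / 2 + 1 := by nlinarith [sq_nonneg (u - 1)]
    linarith [add_one_le_exp (u ^ 2 / 2)]
  calc u * rexp (-(u ^ 2 / 2)) ≤ rexp (u ^ 2 / 2) * rexp (-(u ^ 2 / 2)) :=
        mul_le_mul_of_nonneg_right h1 (exp_nonneg _)
    _ = 1 := by rw [← Real.exp_add]; simp

/-- elementary: r e^{-c r²} ≤ (√c)⁻¹ e^{-(c/2) r²} for c>0, r≥0 -/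
lemma mul_exp_bound {c r : ℝ} (hc : 0 < c) (hr : 0 ≤ r) :
    r * rexp (-c * r ^ 2) ≤ (Real.sqrt c)⁻¹ * rexp (-(c/2) * r ^ 2) := by
  have hs : 0 < Real.sqrt c := Real.sqrt_pos.mpr hc
  have key : r * rexp (-(c/2) * r ^ 2) ≤ (Real.sqrt c)⁻¹ := by
    have hu : 0 ≤ Real.sqrt c * r := by positivity
    have h2 : (Real.sqrt c * r) ^ 2 / 2 = c / 2 * r ^ 2 := by
      rw [mul_pow, sq_sqrt hc.le]; ring
    have h3 := self_mul_exp_le hu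
    rw [h2] at h3
    have : r * rexp (-(c/2) * r ^ 2) = (Real.sqrt c)⁻¹ * (Real.sqrt c * r * rexp (-(c / 2 * r ^ 2))) := by
      field_simp
    rw [this]
    calc (Real.sqrt c)⁻¹ * (Real.sqrt c * r * rexp (-(c / 2 * r ^ 2)))
        ≤ (Real.sqrt c)⁻¹ * 1 := by
          exact mul_le_mul_of_nonneg_left h3 (by positivity)
      _ = (Real.sqrt c)⁻¹ := mul_one _
  calc r * rexp (-c * r ^ 2) = (r * rexp (-(c/2) * r ^ 2)) * rexp (-(c/2) * r ^ 2) := by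
        rw [mul_assoc, ← Real.exp_add]; ring_nf
    _ ≤ (Real.sqrt c)⁻¹ * rexp (-(c/2) * r ^ 2) :=
        mul_le_mul_of_nonneg_right key (exp_nonneg _)


/-- derivative of the kernel -/
def dK (N : ℕ) (t : ℝ) (u : EuclideanSpace ℝ (Fin N)) :
    EuclideanSpace ℝ (Fin N) →L[ℝ] ℝ :=
  (K N t u * (-(4 * t)⁻¹ * 2)) • innerSL ℝ u

lemma hasFDerivAt_K {t : ℝ} (ht : 0 < t) (y x : E) :
    HasFDerivAt (fun x : E => K N t (x - y)) (dK N t (x - y)) x := by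
  have h1 : HasFDerivAt (fun x : E => x - y) (ContinuousLinearMap.id ℝ _) x :=
    (hasFDerivAt_id x).sub_const y
  have h2 : HasFDerivAt (fun x : E => ‖x - y‖ ^ 2)
      (2 • ((innerSL ℝ) (x - y)).comp (ContinuousLinearMap.id ℝ _)) x := h1.norm_sq
  have h3 : HasFDerivAt (fun x : E => -(4*t)⁻¹ * ‖x - y‖ ^ 2)
      ((-(4*t)⁻¹) • (2 • ((innerSL ℝ) (x - y)).comp (ContinuousLinearMap.id ℝ _))) x :=
    h2.const_mul _
  have h4 := h3.exp
  have h5 := h4.const_mul ((4 * π * t) ^ (-(N : ℝ) / 2))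
  have he : (fun x : E => (4 * π * t) ^ (-(N : ℝ) / 2) * rexp (-(4*t)⁻¹ * ‖x - y‖ ^ 2))
      = fun x : E => K N t (x - y) := by
    funext z
    rw [K]
    congr 1
    congr 1
    field_simp
  rw [he] at h5
  refine h5.congr_fderiv (Eq.symm ?_)
  rw [dK, K]
  ext v
  simp [ContinuousLinearMap.smul_apply, smul_smul]
  ring_nf

lemma dK_continuous {t : ℝ} (ht : 0 < t) : Continuous (dK N t) := by
  unfold dK
  exact ((K_continuous ht).mul continuous_const).smul (innerSL ℝ).continuous

def Cd (N : ℕ) (t : ℝ) : ℝ :=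
  (4 * π * t) ^ (-(N : ℝ) / 2) * (2 * t)⁻¹ * (Real.sqrt ((4 * t)⁻¹))⁻¹

lemma Cd_nonneg {t : ℝ} (ht : 0 < t) : 0 ≤ Cd N t := by
  unfold Cd; positivity

lemma norm_dK_le {t : ℝ} (ht : 0 < t) (u : E) :
    ‖dK N t u‖ ≤ Cd N t * rexp (-(8 * t)⁻¹ * ‖u‖ ^ 2) := by
  have hKpos := K_pos (N := N) ht u
  have h1 : ‖dK N t u‖ = K N t u * ((2 * t)⁻¹) * ‖u‖ := by
    rw [dK]
    rw [norm_smul (K N t u * (-(4 * t)⁻¹ * 2)) ((innerSL ℝ) u), innerSL_apply_norm,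
      Real.norm_eq_abs, abs_mul, abs_of_pos hKpos]
    have : |(-(4 * t)⁻¹ * 2)| = (2 * t)⁻¹ := by
      have hneg : (-(4*t)⁻¹ * 2 : ℝ) < 0 := by
        have h' : (0:ℝ) < (4*t)⁻¹ * 2 := by positivity
        linarith
      rw [abs_of_neg hneg]
      field_simp
      ring
    rw [this]
  rw [h1, K_eq ht]
  have h2 : ‖u‖ * rexp (-(4*t)⁻¹ * ‖u‖ ^ 2)
      ≤ (Real.sqrt ((4*t)⁻¹))⁻¹ * rexp (-((4*t)⁻¹/2) * ‖u‖ ^ 2) :=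
    mul_exp_bound (by positivity) (norm_nonneg u)
  have h3 : ((4*t)⁻¹ : ℝ)/2 = (8*t)⁻¹ := by field_simp; ring
  rw [h3] at h2
  calc (4 * π * t) ^ (-(N:ℝ)/2) * rexp (-(4*t)⁻¹ * ‖u‖ ^ 2) * (2*t)⁻¹ * ‖u‖
      = (4 * π * t) ^ (-(N:ℝ)/2) * (2*t)⁻¹ * (‖u‖ * rexp (-(4*t)⁻¹ * ‖u‖ ^ 2)) := by ring
    _ ≤ (4 * π * t) ^ (-(N:ℝ)/2) * (2*t)⁻¹ *
        ((Real.sqrt ((4*t)⁻¹))⁻¹ * rexp (-(8*t)⁻¹ * ‖u‖ ^ 2)) := by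
          apply mul_le_mul_of_nonneg_left h2 (by positivity)
    _ = Cd N t * rexp (-(8 * t)⁻¹ * ‖u‖ ^ 2) := by rw [Cd]; ring

lemma sq_norm_le (a b : E) : ‖a‖ ^ 2 ≤ 2 * ‖a - b‖ ^ 2 + 2 * ‖b‖ ^ 2 := by
  have h1 : ‖a‖ ≤ ‖a - b‖ + ‖b‖ := by
    calc ‖a‖ = ‖a - b + b‖ := by rw [sub_add_cancel]
      _ ≤ ‖a - b‖ + ‖b‖ := norm_add_le _ _
  nlinarith [sq_nonneg (‖a - b‖ - ‖b‖), norm_nonneg (a - b), norm_nonneg b, norm_nonneg a]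

lemma dampedHeat_eq (ρ : ℝ) {σ : ℝ} (hσ : 0 < σ) (g : E → ℝ) (x : E) :
    dampedHeat N ρ σ g x = rexp (-ρ * σ) * ∫ y, K N σ (x - y) * g y := by
  rw [dampedHeat, ← integral_const_mul]
  congr 1
  funext y
  rw [K]
  rw [Real.exp_sub]
  field_simp [Real.exp_neg]
  rw [mul_right_comm, ← Real.exp_add, add_neg_cancel, Real.exp_zero, one_mul]

lemma integrable_K_shift {σ : ℝ} (hσ : 0 < σ) (x : E) :
    Integrable (fun y : E => K N σ (x - y)) :=
  (integrable_K hσ).comp_sub_left x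

lemma integral_K_shift {σ : ℝ} (hσ : 0 < σ) (x : E) :
    ∫ y : E, K N σ (x - y) = 1 := by
  rw [integral_sub_left_eq_self (K N σ) volume x, integral_K hσ]

lemma dampedHeat_abs_le (ρ : ℝ) {σ : ℝ} (hσ : 0 < σ) (g : E → ℝ) (hg : Continuous g)
    {Mg : ℝ} (hMg : ∀ y, |g y| ≤ Mg) (x : E) :
    |dampedHeat N ρ σ g x| ≤ rexp (-ρ * σ) * Mg := by
  rw [dampedHeat_eq ρ hσ g x, abs_mul, abs_of_pos (exp_pos _)]
  apply mul_le_mul_of_nonneg_left _ (exp_nonneg _)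
  have hint : Integrable (fun y : E => K N σ (x - y) * Mg) :=
    (integrable_K_shift hσ x).mul_const Mg
  calc |∫ y, K N σ (x - y) * g y| = ‖∫ y, K N σ (x - y) * g y‖ := (Real.norm_eq_abs _).symm
    _ ≤ ∫ y, K N σ (x - y) * Mg := by
        apply norm_integral_le_of_norm_le hint
        filter_upwards with y
        rw [Real.norm_eq_abs, abs_mul, abs_of_pos (K_pos hσ _)]
        exact mul_le_mul_of_nonneg_left (hMg y) (K_pos hσ _).le
    _ = (∫ y : E, K N σ (x - y)) * Mg := by rw [integral_mul_const]
    _ = Mg := by rw [integral_K_shift hσ x, one_mul]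

def Jc (N : ℕ) (σ : ℝ) : ℝ := ∫ z : EuclideanSpace ℝ (Fin N), rexp (-(8 * σ)⁻¹ * ‖z‖ ^ 2)

/-- Part 2 core: derivative of the damped heat semigroup applied to a bounded continuous g. -/
lemma hasFDerivAt_dampedHeat {σ : ℝ} (hσ : 0 < σ) (lam : ℝ) (g : E → ℝ) (hg : Continuous g)
    {Mg : ℝ} (hMg : ∀ y, |g y| ≤ Mg) (x₀ : E) :
    HasFDerivAt (dampedHeat N lam σ g)
      (rexp (-lam * σ) • ∫ y : E, g y • dK N σ (x₀ - y)) x₀ ∧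
    ‖rexp (-lam * σ) • ∫ y : E, g y • dK N σ (x₀ - y)‖
      ≤ rexp (-lam * σ) * (Mg * (Cd N σ * Jc N σ)) := by
  have hMg0 : 0 ≤ Mg := le_trans (abs_nonneg _) (hMg 0)
  have h8 : (0:ℝ) < (8 * σ)⁻¹ := by positivity
  have h16 : (0:ℝ) < (16 * σ)⁻¹ := by positivity
  have hgauss8 : Integrable (fun z : E => rexp (-(8 * σ)⁻¹ * ‖z‖ ^ 2)) := integrable_gauss h8
  -- pointwise bound of F' at arbitrary x' : for ‖·‖ estimate at x₀ and dominating bound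
  have hptw : ∀ (x y : E), ‖g y • dK N σ (x - y)‖ ≤ Mg * (Cd N σ * rexp (-(8*σ)⁻¹ * ‖x - y‖^2)) := by
    intro x y
    rw [norm_smul (g y) (dK N σ (x - y)), Real.norm_eq_abs]
    exact mul_le_mul (hMg y) (norm_dK_le hσ _) (norm_nonneg _) hMg0
  have hcontF' : ∀ x : E, Continuous (fun y : E => g y • dK N σ (x - y)) := fun x =>
    hg.smul ((dK_continuous hσ).comp (continuous_const.sub continuous_id))
  have hintF' : ∀ x : E, Integrable (fun y : E => g y • dK N σ (x - y)) := by
    intro x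
    refine Integrable.mono' (((hgauss8.comp_sub_left x).const_mul (Mg * Cd N σ))) ((hcontF' x).aestronglyMeasurable) ?_
    filter_upwards with y
    calc ‖g y • dK N σ (x - y)‖ ≤ Mg * (Cd N σ * rexp (-(8*σ)⁻¹ * ‖x - y‖^2)) := hptw x y
      _ = Mg * Cd N σ * rexp (-(8*σ)⁻¹ * ‖x - y‖^2) := by ring
  have key : HasFDerivAt (fun x : E => ∫ y : E, K N σ (x - y) * g y)
      (∫ y : E, g y • dK N σ (x₀ - y)) x₀ := by
    apply hasFDerivAt_integral_of_dominated_of_fderiv_le (F' := fun (x y : E) => g y • dK N σ (x - y))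
      (bound := fun y : E => (Mg * Cd N σ * rexp ((8*σ)⁻¹)) * rexp (-(16*σ)⁻¹ * ‖x₀ - y‖^2))
      (s := Metric.ball x₀ 1) (Metric.ball_mem_nhds x₀ one_pos)
    · filter_upwards with x
      exact (((K_continuous hσ).comp (continuous_const.sub continuous_id)).mul hg).aestronglyMeasurable
    · refine Integrable.mono' ((integrable_K_shift hσ x₀).const_mul Mg) ?_ ?_
      · exact (((K_continuous hσ).comp (continuous_const.sub continuous_id)).mul hg).aestronglyMeasurable
      · filter_upwards with y
        rw [Real.norm_eq_abs, abs_mul, abs_of_pos (K_pos hσ _), mul_comm (K N σ (x₀ - y)) (|g y|)]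
        exact mul_le_mul_of_nonneg_right (hMg y) (K_pos hσ _).le
    · exact (hcontF' x₀).aestronglyMeasurable
    · filter_upwards with y
      intro x hx
      calc ‖g y • dK N σ (x - y)‖ ≤ Mg * (Cd N σ * rexp (-(8*σ)⁻¹ * ‖x - y‖^2)) := hptw x y
        _ ≤ (Mg * Cd N σ * rexp ((8*σ)⁻¹)) * rexp (-(16*σ)⁻¹ * ‖x₀ - y‖^2) := by
            have hb : ‖x₀ - y‖^2 ≤ 2 * ‖x - y‖^2 + 2 := by
              have h1 := sq_norm_le (N := N) (x₀ - y) (x₀ - x)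
              have h2 : x₀ - y - (x₀ - x) = x - y := by abel
              rw [h2] at h1
              have h3 : ‖x₀ - x‖ < 1 := by
                rw [Metric.mem_ball, dist_eq_norm] at hx
                rw [← norm_neg]
                simpa [neg_sub] using hx
              nlinarith [norm_nonneg (x₀ - x)]
            have hexp : rexp (-(8*σ)⁻¹ * ‖x - y‖^2)
                ≤ rexp ((8*σ)⁻¹) * rexp (-(16*σ)⁻¹ * ‖x₀ - y‖^2) := by
              rw [← Real.exp_add]
              apply Real.exp_le_exp.mpr
              have h4 : (16*σ)⁻¹ * ‖x₀ - y‖^2 ≤ (16*σ)⁻¹ * (2 * ‖x - y‖^2 + 2) :=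
                mul_le_mul_of_nonneg_left hb h16.le
              have h5 : (16*σ)⁻¹ * 2 = (8*σ)⁻¹ := by
                field_simp
                ring
              nlinarith [h16.le]
            calc Mg * (Cd N σ * rexp (-(8*σ)⁻¹ * ‖x - y‖^2))
                ≤ Mg * (Cd N σ * (rexp ((8*σ)⁻¹) * rexp (-(16*σ)⁻¹ * ‖x₀ - y‖^2))) := by
                  apply mul_le_mul_of_nonneg_left _ hMg0
                  exact mul_le_mul_of_nonneg_left hexp (Cd_nonneg hσ)
              _ = (Mg * Cd N σ * rexp ((8*σ)⁻¹)) * rexp (-(16*σ)⁻¹ * ‖x₀ - y‖^2) := by ring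
    · exact ((integrable_gauss h16).comp_sub_left x₀).const_mul _
    · filter_upwards with y
      intro x hx
      exact (hasFDerivAt_K hσ y x).mul_const (g y)
  -- assemble
  have heqfun : dampedHeat N lam σ g = fun x => rexp (-lam * σ) * ∫ y : E, K N σ (x - y) * g y :=
    funext fun x => dampedHeat_eq lam hσ g x
  constructor
  · rw [heqfun]
    exact key.const_mul _
  · rw [norm_smul (rexp (-lam * σ)) (∫ y : E, g y • dK N σ (x₀ - y)), Real.norm_eq_abs,
      abs_of_pos (exp_pos _)]
    apply mul_le_mul_of_nonneg_left _ (exp_nonneg _)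
    calc ‖∫ y : E, g y • dK N σ (x₀ - y)‖
        ≤ ∫ y : E, Mg * Cd N σ * rexp (-(8*σ)⁻¹ * ‖x₀ - y‖^2) := by
          apply norm_integral_le_of_norm_le ((hgauss8.comp_sub_left x₀).const_mul (Mg * Cd N σ))
          filter_upwards with y
          calc ‖g y • dK N σ (x₀ - y)‖ ≤ Mg * (Cd N σ * rexp (-(8*σ)⁻¹ * ‖x₀ - y‖^2)) := hptw x₀ y
            _ = Mg * Cd N σ * rexp (-(8*σ)⁻¹ * ‖x₀ - y‖^2) := by ring
      _ = Mg * Cd N σ * ∫ y : E, rexp (-(8*σ)⁻¹ * ‖x₀ - y‖^2) := by rw [integral_const_mul]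
      _ = Mg * (Cd N σ * Jc N σ) := by
          rw [Jc, integral_sub_left_eq_self (fun z : E => rexp (-(8*σ)⁻¹ * ‖z‖^2)) volume x₀]
          ring

lemma norm_gradient_eq (f : E → ℝ) (x : E) : ‖gradient f x‖ = ‖fderiv ℝ f x‖ := by
  rw [gradient]
  exact LinearIsometryEquiv.norm_map _ _

/-- Part 1 core: derivative of the damped heat semigroup applied to a C¹ function
commutes with the gradient. -/
lemma hasFDerivAt_dampedHeat_smooth {σ : ℝ} (hσ : 0 < σ) (lam : ℝ) (ψT : E → ℝ)
    (hd : ContDiff ℝ 1 ψT) {M0 M1 : ℝ} (hb : ∀ x, |ψT x| ≤ M0)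
    (hg1 : ∀ x, ‖fderiv ℝ ψT x‖ ≤ M1) (x₀ : E) :
    HasFDerivAt (dampedHeat N lam σ ψT)
      (rexp (-lam * σ) • ∫ z : E, K N σ z • fderiv ℝ ψT (x₀ - z)) x₀ ∧
    ‖rexp (-lam * σ) • ∫ z : E, K N σ z • fderiv ℝ ψT (x₀ - z)‖ ≤ rexp (-lam * σ) * M1 := by
  have hM1 : 0 ≤ M1 := le_trans (norm_nonneg _) (hg1 0)
  have hψc : Continuous ψT := hd.continuous
  have hfc : Continuous (fderiv ℝ ψT) := hd.continuous_fderiv one_ne_zero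
  have heqfun : dampedHeat N lam σ ψT
      = fun x => rexp (-lam * σ) * ∫ z : E, K N σ z * ψT (x - z) := by
    funext x
    rw [dampedHeat_eq lam hσ ψT x]
    congr 1
    rw [← integral_sub_left_eq_self (fun y : E => K N σ (x - y) * ψT y) volume x]
    congr 1
    funext z
    rw [sub_sub_cancel]
  have hdiff : ∀ (z x : E), HasFDerivAt (fun x : E => K N σ z * ψT (x - z))
      (K N σ z • fderiv ℝ ψT (x - z)) x := by
    intro z x
    have h1 : HasFDerivAt (fun x : E => x - z) (ContinuousLinearMap.id ℝ _) x :=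
      (hasFDerivAt_id x).sub_const z
    have h2 : HasFDerivAt (fun x : E => ψT (x - z))
        ((fderiv ℝ ψT (x - z)).comp (ContinuousLinearMap.id ℝ _)) x :=
      HasFDerivAt.comp x ((hd.differentiable one_ne_zero) (x - z)).hasFDerivAt h1
    rw [ContinuousLinearMap.comp_id] at h2
    exact h2.const_mul (K N σ z)
  have hcontF' : Continuous (fun z : E => K N σ z • fderiv ℝ ψT (x₀ - z)) :=
    (K_continuous hσ).smul (hfc.comp (continuous_const.sub continuous_id))
  have key : HasFDerivAt (fun x : E => ∫ z : E, K N σ z * ψT (x - z))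
      (∫ z : E, K N σ z • fderiv ℝ ψT (x₀ - z)) x₀ := by
    apply hasFDerivAt_integral_of_dominated_of_fderiv_le
      (F' := fun (x z : E) => K N σ z • fderiv ℝ ψT (x - z))
      (bound := fun z : E => K N σ z * M1) (s := Metric.ball x₀ 1) (Metric.ball_mem_nhds x₀ one_pos)
    · filter_upwards with x
      exact ((K_continuous hσ).mul (hψc.comp (continuous_const.sub continuous_id))).aestronglyMeasurable
    · refine Integrable.mono' ((integrable_K hσ).mul_const M0) ?_ ?_
      · exact ((K_continuous hσ).mul (hψc.comp (continuous_const.sub continuous_id))).aestronglyMeasurable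
      · filter_upwards with z
        rw [Real.norm_eq_abs, abs_mul, abs_of_pos (K_pos hσ _)]
        exact mul_le_mul_of_nonneg_left (hb _) (K_pos hσ _).le
    · exact hcontF'.aestronglyMeasurable
    · filter_upwards with z
      intro x _
      rw [norm_smul (K N σ z) (fderiv ℝ ψT (x - z)), Real.norm_eq_abs, abs_of_pos (K_pos hσ _)]
      exact mul_le_mul_of_nonneg_left (hg1 _) (K_pos hσ _).le
    · exact (integrable_K hσ).mul_const M1
    · filter_upwards with z
      intro x _
      exact hdiff z x
  constructor
  · rw [heqfun]
    exact key.const_mul _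
  · rw [norm_smul (rexp (-lam * σ)) (∫ z : E, K N σ z • fderiv ℝ ψT (x₀ - z)),
      Real.norm_eq_abs, abs_of_pos (exp_pos _)]
    apply mul_le_mul_of_nonneg_left _ (exp_nonneg _)
    calc ‖∫ z : E, K N σ z • fderiv ℝ ψT (x₀ - z)‖
        ≤ ∫ z : E, K N σ z * M1 := by
          apply norm_integral_le_of_norm_le ((integrable_K hσ).mul_const M1)
          filter_upwards with z
          rw [norm_smul (K N σ z) (fderiv ℝ ψT (x₀ - z)), Real.norm_eq_abs,
            abs_of_pos (K_pos hσ _)]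
          exact mul_le_mul_of_nonneg_left (hg1 _) (K_pos hσ _).le
      _ = (∫ z : E, K N σ z) * M1 := by rw [integral_mul_const]
      _ = M1 := by rw [integral_K hσ, one_mul]


section Meas

variable {T t lam : ℝ} (x₀ : E)

lemma contOn_base (T t : ℝ) :
    ContinuousOn (fun p : ℝ × E => (4 * π * (p.1 - T)) ^ (-(N:ℝ)/2))
      (Set.Ioc T t ×ˢ (Set.univ : Set E)) := by
  apply ContinuousOn.rpow_const
  · exact (continuous_const.mul (continuous_fst.sub continuous_const)).continuousOn
  · rintro ⟨s, y⟩ ⟨hs, -⟩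
    left
    have : (0:ℝ) < s - T := sub_pos.mpr hs.1
    positivity

lemma contOn_exp (T t lam : ℝ) (x₀ : E) :
    ContinuousOn (fun p : ℝ × E => rexp (-‖x₀ - p.2‖ ^ 2 / (4 * (p.1 - T)) - lam * (p.1 - T)))
      (Set.Ioc T t ×ˢ (Set.univ : Set E)) := by
  apply Real.continuous_exp.comp_continuousOn
  apply ContinuousOn.sub
  · apply ContinuousOn.div
    · exact ((continuous_const.sub continuous_snd).norm.pow 2).neg.continuousOn
    · exact (continuous_const.mul (continuous_fst.sub continuous_const)).continuousOn
    · rintro ⟨s, y⟩ ⟨hs, -⟩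
      have : (0:ℝ) < s - T := sub_pos.mpr hs.1
      positivity
  · exact (continuous_const.mul (continuous_fst.sub continuous_const)).continuousOn

lemma contOn_w {T t : ℝ} (w : ℝ → (EuclideanSpace ℝ (Fin N) →ᵇ ℝ))
    (hw : ContinuousOn w (Set.Ici T)) (htt : T ≤ t) :
    ContinuousOn (fun p : ℝ × E => w (t - p.1 + T) p.2)
      (Set.Ioc T t ×ˢ (Set.univ : Set E)) := by
  have h1 : ContinuousOn (fun p : ℝ × E => (w (t - p.1 + T), p.2))
      (Set.Ioc T t ×ˢ (Set.univ : Set E)) := by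
    apply ContinuousOn.prodMk
    · apply hw.comp ((continuous_const.sub continuous_fst).add continuous_const).continuousOn
      rintro ⟨s, y⟩ ⟨hs, -⟩
      show T ≤ t - s + T
      have : s ≤ t := hs.2
      linarith
    · exact continuous_snd.continuousOn
  exact continuous_eval.comp_continuousOn h1

lemma prod_meas_eq :
    (volume.restrict (Set.Ioc T t)).prod (volume : Measure E)
      = ((volume : Measure ℝ).prod (volume : Measure E)).restrict
          (Set.Ioc T t ×ˢ (Set.univ : Set E)) := by
  conv_lhs => rw [← Measure.restrict_univ (μ := (volume : Measure E))]
  exact Measure.prod_restrict _ _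

lemma aesm_dampedHeat (lam : ℝ) {T t : ℝ} (htt : T ≤ t)
    (w : ℝ → (EuclideanSpace ℝ (Fin N) →ᵇ ℝ)) (hw : ContinuousOn w (Set.Ici T)) (x₀ : E) :
    AEStronglyMeasurable (fun s => dampedHeat N lam (s - T) (⇑(w (t - s + T))) x₀)
      (volume.restrict (Set.Ioc T t)) := by
  have key : AEStronglyMeasurable
      (fun p : ℝ × E => (4 * π * (p.1 - T)) ^ (-(N:ℝ)/2)
        * rexp (-‖x₀ - p.2‖ ^ 2 / (4 * (p.1 - T)) - lam * (p.1 - T)) * w (t - p.1 + T) p.2)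
      ((volume.restrict (Set.Ioc T t)).prod (volume : Measure E)) := by
    rw [prod_meas_eq]
    exact (((contOn_base T t).mul (contOn_exp T t lam x₀)).mul (contOn_w w hw htt)).aestronglyMeasurable
      (measurableSet_Ioc.prod MeasurableSet.univ)
  exact key.integral_prod_right'

lemma aesm_deriv (lam : ℝ) {T t : ℝ} (htt : T ≤ t)
    (w : ℝ → (EuclideanSpace ℝ (Fin N) →ᵇ ℝ)) (hw : ContinuousOn w (Set.Ici T)) (x₀ : E) :
    AEStronglyMeasurable
      (fun s => rexp (-lam * (s - T)) • ∫ y : E, w (t - s + T) y • dK N (s - T) (x₀ - y))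
      (volume.restrict (Set.Ioc T t)) := by
  have hKj : ContinuousOn (fun p : ℝ × E => K N (p.1 - T) (x₀ - p.2))
      (Set.Ioc T t ×ˢ (Set.univ : Set E)) := by
    apply ContinuousOn.mul (contOn_base T t)
    apply Real.continuous_exp.comp_continuousOn
    apply ContinuousOn.div
    · exact ((continuous_const.sub continuous_snd).norm.pow 2).neg.continuousOn
    · exact (continuous_const.mul (continuous_fst.sub continuous_const)).continuousOn
    · rintro ⟨s, y⟩ ⟨hs, -⟩
      have : (0:ℝ) < s - T := sub_pos.mpr hs.1
      positivity
  have hdKj : ContinuousOn (fun p : ℝ × E => dK N (p.1 - T) (x₀ - p.2))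
      (Set.Ioc T t ×ˢ (Set.univ : Set E)) := by
    unfold dK
    refine ContinuousOn.smul (f := fun p : ℝ × E => K N (p.1 - T) (x₀ - p.2) * (-(4 * (p.1 - T))⁻¹ * 2))
      (g := fun p : ℝ × E => innerSL ℝ (x₀ - p.2)) ?_ ?_
    · apply hKj.mul
      apply ContinuousOn.mul _ continuousOn_const
      apply ContinuousOn.neg
      apply ContinuousOn.inv₀
      · exact (continuous_const.mul (continuous_fst.sub continuous_const)).continuousOn
      · rintro ⟨s, y⟩ ⟨hs, -⟩
        have : (0:ℝ) < s - T := sub_pos.mpr hs.1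
        positivity
    · exact ((innerSL ℝ).continuous.comp (continuous_const.sub continuous_snd)).continuousOn
  have key : AEStronglyMeasurable
      (fun p : ℝ × E => w (t - p.1 + T) p.2 • dK N (p.1 - T) (x₀ - p.2))
      ((volume.restrict (Set.Ioc T t)).prod (volume : Measure E)) := by
    rw [prod_meas_eq]
    exact ((contOn_w w hw htt).smul hdKj).aestronglyMeasurable
      (measurableSet_Ioc.prod MeasurableSet.univ)
  exact (Continuous.aestronglyMeasurable (f := fun s : ℝ => rexp (-lam * (s - T))) (by continuity)).smul key.integral_prod_right'

end Meas


lemma contOn_rpow_exp (c : ℝ) (s : Set ℝ) (hs : ∀ x ∈ s, x ≠ 0) :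
    ContinuousOn (fun u : ℝ => u ^ (-(1:ℝ)/2) * rexp (-c * u)) s := by
  apply ContinuousOn.mul _ (Real.continuous_exp.comp (continuous_const.mul continuous_id)).continuousOn
  apply ContinuousOn.rpow_const continuousOn_id
  intro x hx
  exact Or.inl (hs x hx)

lemma integrableOn_rpow_exp {c : ℝ} (hc : 0 < c) :
    IntegrableOn (fun u : ℝ => u ^ (-(1:ℝ)/2) * rexp (-c * u)) (Set.Ioi 0) := by
  have h1 : IntegrableOn (fun u : ℝ => u ^ (-(1:ℝ)/2) * rexp (-c * u)) (Set.Ioc 0 1) := by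
    apply Integrable.mono' ((intervalIntegrable_iff_integrableOn_Ioc_of_le zero_le_one).mp
      (intervalIntegral.intervalIntegrable_rpow' (r := -(1:ℝ)/2) (by norm_num)))
    · exact (contOn_rpow_exp c _ fun x hx => ne_of_gt hx.1).aestronglyMeasurable measurableSet_Ioc
    · rw [ae_restrict_iff' measurableSet_Ioc]
      filter_upwards with u hu
      rw [Real.norm_eq_abs, abs_mul, abs_of_nonneg (rpow_nonneg hu.1.le _),
        abs_of_pos (exp_pos _)]
      calc u ^ (-(1:ℝ)/2) * rexp (-c * u) ≤ u ^ (-(1:ℝ)/2) * 1 := by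
            apply mul_le_mul_of_nonneg_left _ (rpow_nonneg hu.1.le _)
            rw [Real.exp_le_one_iff]
            have := hu.1
            nlinarith
        _ = u ^ (-(1:ℝ)/2) := mul_one _
  have h2 : IntegrableOn (fun u : ℝ => u ^ (-(1:ℝ)/2) * rexp (-c * u)) (Set.Ioi 1) := by
    apply Integrable.mono' ((exp_neg_integrableOn_Ioi 1 hc))
    · exact (contOn_rpow_exp c _ fun x hx => by
        have : (1:ℝ) < x := hx
        positivity).aestronglyMeasurable measurableSet_Ioi
    · rw [ae_restrict_iff' measurableSet_Ioi]
      filter_upwards with u hu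
      have hu1 : (1:ℝ) ≤ u := le_of_lt hu
      rw [Real.norm_eq_abs, abs_mul, abs_of_nonneg (rpow_nonneg (by linarith) _),
        abs_of_pos (exp_pos _)]
      calc u ^ (-(1:ℝ)/2) * rexp (-c * u) ≤ 1 * rexp (-c * u) := by
            apply mul_le_mul_of_nonneg_right _ (exp_nonneg _)
            exact Real.rpow_le_one_of_one_le_of_nonpos hu1 (by norm_num)
        _ = rexp (-c * u) := one_mul _
  have : Set.Ioi (0:ℝ) = Set.Ioc 0 1 ∪ Set.Ioi 1 := (Set.Ioc_union_Ioi_eq_Ioi zero_le_one).symm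
  rw [this]
  exact h1.union h2

end Aux13


set_option maxHeartbeats 1000000 in
open Aux13 in
theorem stmt_13 (N : ℕ) (hN : 1 ≤ N) (lam μ β : ℝ) (hlam : 0 < lam) (hμ : 0 < μ)
    (hβ0 : 0 < β) (hβ : β < lam) (T : ℝ) (hT : 0 ≤ T) (Ctil : ℝ) (hCtil : 0 < Ctil)
    (ψT : EuclideanSpace ℝ (Fin N) → ℝ) (hψTd : ContDiff ℝ 1 ψT)
    (hψTb : ∃ M : ℝ, ∀ x, |ψT x| ≤ M) (hψTg : ∃ M : ℝ, ∀ x, ‖gradient ψT x‖ ≤ M)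
    (w : ℝ → (EuclideanSpace ℝ (Fin N) →ᵇ ℝ))
    (hw : ContinuousOn w (Set.Ici T))
    (hwb : ∀ s : ℝ, T ≤ s → ‖w s‖ ≤ Ctil * Real.exp (-β * (s - T)))
    (ψ : ℝ → EuclideanSpace ℝ (Fin N) → ℝ)
    (hψ : ∀ (t : ℝ) (x : EuclideanSpace ℝ (Fin N)),
      ψ t x = dampedHeat N lam (t - T) ψT x +
        μ * ∫ s in Set.Ioc T t, dampedHeat N lam (s - T) (⇑(w (t - s + T))) x)
    (C_N : ℝ)
    (hCN : ∀ s : ℝ, 0 < s → ∀ g : EuclideanSpace ℝ (Fin N) → ℝ,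
      Continuous g → (∃ M : ℝ, ∀ x, |g x| ≤ M) →
      (⨆ x, ‖gradient (dampedHeat N lam s g) x‖) ≤
        C_N * s ^ (-(1 : ℝ) / 2) * Real.exp (-lam * s) * ⨆ x, |g x|)
    (C₃ : ℝ)
    (hC₃ : C₃ = ∫ s in Set.Ioi (0 : ℝ), s ^ (-(1 : ℝ) / 2) * Real.exp (-(lam - β) * s)) :
    ∀ t : ℝ, T < t →
      (⨆ x, ‖gradient (ψ t) x‖) ≤
        Real.exp (-β * (t - T)) * ((⨆ x, ‖gradient ψT x‖) + μ * Ctil * C_N * C₃) := by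
  intro t ht
  have hτ : 0 < t - T := sub_pos.mpr ht
  obtain ⟨M0, hM0⟩ := hψTb
  obtain ⟨M1, hM1⟩ := hψTg
  set G := ⨆ x, ‖gradient ψT x‖ with hGdef
  have hGbdd : BddAbove (Set.range fun x : EuclideanSpace ℝ (Fin N) => ‖gradient ψT x‖) :=
    ⟨M1, by rintro _ ⟨x, rfl⟩; exact hM1 x⟩
  have hG0 : 0 ≤ G := le_trans (norm_nonneg _) (le_ciSup hGbdd 0)
  have hfd : ∀ x, ‖fderiv ℝ ψT x‖ ≤ G := fun x => by
    rw [← Aux13.norm_gradient_eq]; exact le_ciSup hGbdd x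
  -- C_N is nonnegative
  have hCN0 : 0 ≤ C_N := by
    have hconst : dampedHeat N lam 1 (fun _ => (1:ℝ)) = fun _ => rexp (-lam * 1) := by
      funext x
      rw [Aux13.dampedHeat_eq lam one_pos _ x]
      simp only [mul_one]
      rw [Aux13.integral_K_shift one_pos x, mul_one]
    have h := hCN 1 one_pos (fun _ => 1) continuous_const ⟨1, fun x => by norm_num⟩
    rw [hconst] at h
    have hL : (⨆ x : EuclideanSpace ℝ (Fin N),
        ‖gradient (fun _ : EuclideanSpace ℝ (Fin N) => rexp (-lam * 1)) x‖) = 0 := by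
      have heq : (fun x : EuclideanSpace ℝ (Fin N) =>
          ‖gradient (fun _ : EuclideanSpace ℝ (Fin N) => rexp (-lam * 1)) x‖)
          = fun _ => (0:ℝ) := by
        funext x
        rw [gradient_fun_const, norm_zero]
      rw [heq, ciSup_const]
    have hR : (⨆ _ : EuclideanSpace ℝ (Fin N), |(1:ℝ)|) = 1 := by
      rw [ciSup_const, abs_one]
    rw [hL, hR] at h
    rw [Real.one_rpow, mul_one, mul_one] at h
    exact (mul_nonneg_iff_of_pos_right (Real.exp_pos _)).mp h
  -- Part 1
  have part1 := fun x => Aux13.hasFDerivAt_dampedHeat_smooth hτ lam ψT hψTd hM0 hfd x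
  -- auxiliary facts about w
  have habs : ∀ (r : ℝ) (y : EuclideanSpace ℝ (Fin N)), |w r y| ≤ ‖w r‖ := fun r y => by
    rw [← Real.norm_eq_abs]; exact (w r).norm_coe_le_norm y
  have hwTs : ∀ s ∈ Set.Ioc T t, ‖w (t - s + T)‖ ≤ Ctil * rexp (-β * (t - s)) := by
    intro s hs
    have h := hwb (t - s + T) (by linarith [hs.2])
    simpa using h
  have key2 : ∀ s ∈ Set.Ioc T t, ∀ x : EuclideanSpace ℝ (Fin N),
      HasFDerivAt (dampedHeat N lam (s - T) (⇑(w (t - s + T))))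
        (rexp (-lam * (s - T)) • ∫ y, w (t - s + T) y • dK N (s - T) (x - y)) x ∧
      ‖rexp (-lam * (s - T)) • ∫ y, w (t - s + T) y • dK N (s - T) (x - y)‖
        ≤ rexp (-lam * (s - T)) * (‖w (t - s + T)‖ * (Cd N (s - T) * Jc N (s - T))) :=
    fun s hs x => Aux13.hasFDerivAt_dampedHeat (sub_pos.mpr hs.1) lam _
      (w _).continuous (habs _) x
  -- pointwise derivative bound via hCN
  have hDxb : ∀ s ∈ Set.Ioc T t, ∀ x : EuclideanSpace ℝ (Fin N),
      ‖rexp (-lam * (s - T)) • ∫ y, w (t - s + T) y • dK N (s - T) (x - y)‖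
        ≤ C_N * (s - T) ^ (-(1:ℝ)/2) * rexp (-lam * (s - T)) * (Ctil * rexp (-β * (t - s))) := by
    intro s hs x
    have hσ : 0 < s - T := sub_pos.mpr hs.1
    have hg := key2 s hs
    have hgradeq : ∀ x' : EuclideanSpace ℝ (Fin N),
        ‖gradient (dampedHeat N lam (s - T) (⇑(w (t - s + T)))) x'‖
          = ‖rexp (-lam * (s - T)) • ∫ y, w (t - s + T) y • dK N (s - T) (x' - y)‖ := fun x' => by
      have hng := Aux13.norm_gradient_eq (dampedHeat N lam (s - T) (⇑(w (t - s + T)))) x'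
      rw [hng, (hg x').1.fderiv]
    have hbdd : BddAbove (Set.range fun x' : EuclideanSpace ℝ (Fin N) =>
        ‖gradient (dampedHeat N lam (s - T) (⇑(w (t - s + T)))) x'‖) := by
      refine ⟨rexp (-lam * (s - T)) * (‖w (t - s + T)‖ * (Cd N (s - T) * Jc N (s - T))), ?_⟩
      rintro _ ⟨x', rfl⟩
      simp only
      rw [hgradeq x']
      exact (hg x').2
    have hsup := hCN (s - T) hσ _ (w (t - s + T)).continuous ⟨‖w (t - s + T)‖, habs _⟩
    have hA : (⨆ y, |w (t - s + T) y|) ≤ ‖w (t - s + T)‖ :=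
      Real.iSup_le (habs _) (norm_nonneg _)
    have hcf : 0 ≤ C_N * (s - T) ^ (-(1:ℝ)/2) * rexp (-lam * (s - T)) :=
      mul_nonneg (mul_nonneg hCN0 (Real.rpow_nonneg hσ.le _)) (Real.exp_nonneg _)
    calc ‖rexp (-lam * (s - T)) • ∫ y, w (t - s + T) y • dK N (s - T) (x - y)‖
        = ‖gradient (dampedHeat N lam (s - T) (⇑(w (t - s + T)))) x‖ := (hgradeq x).symm
      _ ≤ ⨆ x', ‖gradient (dampedHeat N lam (s - T) (⇑(w (t - s + T)))) x'‖ := le_ciSup hbdd x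
      _ ≤ C_N * (s - T) ^ (-(1:ℝ)/2) * rexp (-lam * (s - T)) * ⨆ y, |w (t - s + T) y| := hsup
      _ ≤ C_N * (s - T) ^ (-(1:ℝ)/2) * rexp (-lam * (s - T)) * ‖w (t - s + T)‖ :=
          mul_le_mul_of_nonneg_left hA hcf
      _ ≤ C_N * (s - T) ^ (-(1:ℝ)/2) * rexp (-lam * (s - T)) * (Ctil * rexp (-β * (t - s))) :=
          mul_le_mul_of_nonneg_left (hwTs s hs) hcf
  -- integrability of the rpow bound
  have hIrpow : IntegrableOn (fun s : ℝ => (s - T) ^ (-(1:ℝ)/2)) (Set.Ioc T t) := by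
    have h0 : IntervalIntegrable (fun u : ℝ => u ^ (-(1:ℝ)/2)) volume 0 (t - T) :=
      intervalIntegral.intervalIntegrable_rpow' (by norm_num)
    have h1 := h0.comp_sub_right T
    simp only [zero_add, sub_add_cancel] at h1
    exact (intervalIntegrable_iff_integrableOn_Ioc_of_le ht.le).mp h1
  have keyPhi : ∀ x₀ : EuclideanSpace ℝ (Fin N),
      HasFDerivAt (fun x => ∫ s in Set.Ioc T t, dampedHeat N lam (s - T) (⇑(w (t - s + T))) x)
        (∫ s in Set.Ioc T t,
          rexp (-lam * (s - T)) • ∫ y, w (t - s + T) y • dK N (s - T) (x₀ - y)) x₀ := by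
    intro x₀
    apply hasFDerivAt_integral_of_dominated_of_fderiv_le
      (F' := fun (x : EuclideanSpace ℝ (Fin N)) (s : ℝ) =>
        rexp (-lam * (s - T)) • ∫ y, w (t - s + T) y • dK N (s - T) (x - y))
      (bound := fun s => C_N * Ctil * (s - T) ^ (-(1:ℝ)/2)) (s := Metric.ball x₀ 1) (Metric.ball_mem_nhds x₀ one_pos)
    · filter_upwards with x
      exact Aux13.aesm_dampedHeat lam ht.le w hw x
    · apply Integrable.mono' (integrableOn_const (C := Ctil) measure_Ioc_lt_top.ne)
        (Aux13.aesm_dampedHeat lam ht.le w hw x₀)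
      rw [ae_restrict_iff' measurableSet_Ioc]
      filter_upwards with s hs
      have hσ : 0 < s - T := sub_pos.mpr hs.1
      have h1 := Aux13.dampedHeat_abs_le lam hσ _ (w (t - s + T)).continuous (habs _) x₀
      rw [Real.norm_eq_abs]
      refine le_trans h1 ?_
      have e1 : rexp (-lam * (s - T)) ≤ 1 := Real.exp_le_one_iff.mpr (by nlinarith)
      have e2 : ‖w (t - s + T)‖ ≤ Ctil := by
        refine le_trans (hwTs s hs) ?_
        have e3 : rexp (-β * (t - s)) ≤ 1 := Real.exp_le_one_iff.mpr (by nlinarith [hs.2])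
        nlinarith
      calc rexp (-lam * (s - T)) * ‖w (t - s + T)‖ ≤ 1 * Ctil :=
          mul_le_mul e1 e2 (norm_nonneg _) one_pos.le
        _ = Ctil := one_mul _
    · exact Aux13.aesm_deriv lam ht.le w hw x₀
    · rw [ae_restrict_iff' measurableSet_Ioc]
      filter_upwards with s hs
      intro x hx
      have hσ : 0 < s - T := sub_pos.mpr hs.1
      refine le_trans (hDxb s hs x) ?_
      have e1 : rexp (-lam * (s - T)) ≤ 1 := Real.exp_le_one_iff.mpr (by nlinarith)
      have e2 : rexp (-β * (t - s)) ≤ 1 := Real.exp_le_one_iff.mpr (by nlinarith [hs.2])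
      have h2 : rexp (-lam * (s - T)) * (Ctil * rexp (-β * (t - s))) ≤ Ctil := by
        simpa using mul_le_mul e1 (mul_le_mul_of_nonneg_left e2 hCtil.le)
          (by positivity) one_pos.le
      calc C_N * (s - T) ^ (-(1:ℝ)/2) * rexp (-lam * (s - T)) * (Ctil * rexp (-β * (t - s)))
          = (C_N * (s - T) ^ (-(1:ℝ)/2))
              * (rexp (-lam * (s - T)) * (Ctil * rexp (-β * (t - s)))) := by ring
        _ ≤ (C_N * (s - T) ^ (-(1:ℝ)/2)) * Ctil :=
            mul_le_mul_of_nonneg_left h2 (mul_nonneg hCN0 (Real.rpow_nonneg hσ.le _))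
        _ = C_N * Ctil * (s - T) ^ (-(1:ℝ)/2) := by ring
    · exact hIrpow.const_mul (C_N * Ctil)
    · rw [ae_restrict_iff' measurableSet_Ioc]
      filter_upwards with s hs
      intro x hx
      exact (key2 s hs x).1
  -- integrability of the sharp bound
  have hintb : IntegrableOn (fun s => C_N * (s - T) ^ (-(1:ℝ)/2) * rexp (-lam * (s - T))
      * (Ctil * rexp (-β * (t - s)))) (Set.Ioc T t) := by
    apply Integrable.mono' (hIrpow.const_mul (C_N * Ctil))
    · apply ContinuousOn.aestronglyMeasurable _ measurableSet_Ioc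
      apply ContinuousOn.mul
      apply ContinuousOn.mul
      apply ContinuousOn.mul continuousOn_const
      · apply ContinuousOn.rpow_const (continuous_id.sub continuous_const).continuousOn
        intro s hs
        exact Or.inl (ne_of_gt (sub_pos.mpr hs.1))
      · exact (Real.continuous_exp.comp
          (continuous_const.mul (continuous_id.sub continuous_const))).continuousOn
      · exact (continuous_const.mul (Real.continuous_exp.comp
          (continuous_const.mul (continuous_const.sub continuous_id)))).continuousOn
    · rw [ae_restrict_iff' measurableSet_Ioc]
      filter_upwards with s hs
      have hσ : 0 < s - T := sub_pos.mpr hs.1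
      have e1 : rexp (-lam * (s - T)) ≤ 1 := Real.exp_le_one_iff.mpr (by nlinarith)
      have e2 : rexp (-β * (t - s)) ≤ 1 := Real.exp_le_one_iff.mpr (by nlinarith [hs.2])
      rw [Real.norm_eq_abs, abs_of_nonneg (by positivity)]
      calc C_N * (s - T) ^ (-(1:ℝ)/2) * rexp (-lam * (s - T)) * (Ctil * rexp (-β * (t - s)))
          = (C_N * (s - T) ^ (-(1:ℝ)/2))
              * (rexp (-lam * (s - T)) * (Ctil * rexp (-β * (t - s)))) := by ring
        _ ≤ (C_N * (s - T) ^ (-(1:ℝ)/2)) * (1 * (Ctil * 1)) := by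
            refine mul_le_mul_of_nonneg_left ?_
              (mul_nonneg hCN0 (Real.rpow_nonneg hσ.le _))
            exact mul_le_mul e1 (mul_le_mul_of_nonneg_left e2 hCtil.le)
              (by positivity) one_pos.le
        _ = C_N * Ctil * (s - T) ^ (-(1:ℝ)/2) := by ring
  have hC₃0 : 0 ≤ C₃ := by
    rw [hC₃]
    apply setIntegral_nonneg measurableSet_Ioi
    intro u hu
    exact mul_nonneg (Real.rpow_nonneg (le_of_lt hu) _) (Real.exp_nonneg _)
  -- norm bound for the derivative of the integral term
  have hDPhib : ∀ x₀ : EuclideanSpace ℝ (Fin N),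
      ‖∫ s in Set.Ioc T t,
        rexp (-lam * (s - T)) • ∫ y, w (t - s + T) y • dK N (s - T) (x₀ - y)‖
      ≤ rexp (-β * (t - T)) * (C_N * Ctil * C₃) := by
    intro x₀
    have h1 : ‖∫ s in Set.Ioc T t,
        rexp (-lam * (s - T)) • ∫ y, w (t - s + T) y • dK N (s - T) (x₀ - y)‖
        ≤ ∫ s in Set.Ioc T t, C_N * (s - T) ^ (-(1:ℝ)/2) * rexp (-lam * (s - T))
            * (Ctil * rexp (-β * (t - s))) := by
      apply norm_integral_le_of_norm_le hintb
      rw [ae_restrict_iff' measurableSet_Ioc]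
      filter_upwards with s hs
      exact hDxb s hs x₀
    refine le_trans h1 ?_
    have hexp : ∀ s : ℝ, rexp (-lam * (s - T)) * rexp (-β * (t - s))
        = rexp (-β * (t - T)) * rexp (-(lam - β) * (s - T)) := fun s => by
      rw [← Real.exp_add, ← Real.exp_add]
      congr 1
      ring
    calc ∫ s in Set.Ioc T t, C_N * (s - T) ^ (-(1:ℝ)/2) * rexp (-lam * (s - T))
            * (Ctil * rexp (-β * (t - s)))
        = (C_N * Ctil * rexp (-β * (t - T)))
            * ∫ s in Set.Ioc T t, (s - T) ^ (-(1:ℝ)/2) * rexp (-(lam - β) * (s - T)) := by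
          rw [← integral_const_mul]
          refine integral_congr_ae (Filter.Eventually.of_forall fun s => ?_)
          have h := hexp s
          simp only
          linear_combination (C_N * Ctil * (s - T) ^ (-(1:ℝ)/2)) * h
      _ = (C_N * Ctil * rexp (-β * (t - T)))
            * ∫ u in Set.Ioc 0 (t - T), u ^ (-(1:ℝ)/2) * rexp (-(lam - β) * u) := by
          congr 1
          rw [← intervalIntegral.integral_of_le ht.le,
            intervalIntegral.integral_comp_sub_right
              (fun u => u ^ (-(1:ℝ)/2) * rexp (-(lam - β) * u)) T,
            sub_self, intervalIntegral.integral_of_le (by linarith)]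
      _ ≤ (C_N * Ctil * rexp (-β * (t - T))) * C₃ := by
          refine mul_le_mul_of_nonneg_left ?_
            (mul_nonneg (mul_nonneg hCN0 hCtil.le) (Real.exp_nonneg _))
          rw [hC₃]
          apply setIntegral_mono_set (integrableOn_rpow_exp (sub_pos.mpr hβ))
          · rw [Filter.EventuallyLE, ae_restrict_iff' measurableSet_Ioi]
            filter_upwards with u hu
            exact mul_nonneg (Real.rpow_nonneg (le_of_lt hu) _) (Real.exp_nonneg _)
          · exact Set.Ioc_subset_Ioi_self.eventuallyLE
      _ = rexp (-β * (t - T)) * (C_N * Ctil * C₃) := by ring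
  -- final assembly
  apply Real.iSup_le _ (mul_nonneg (Real.exp_nonneg _) (add_nonneg hG0
    (mul_nonneg (mul_nonneg (mul_nonneg hμ.le hCtil.le) hCN0) hC₃0)))
  intro x
  have hfun : ψ t = fun x => dampedHeat N lam (t - T) ψT x
      + μ * ∫ s in Set.Ioc T t, dampedHeat N lam (s - T) (⇑(w (t - s + T))) x :=
    funext fun x => hψ t x
  have hD : HasFDerivAt (ψ t)
      ((rexp (-lam * (t - T)) • ∫ z, K N (t - T) z • fderiv ℝ ψT (x - z))
        + μ • ∫ s in Set.Ioc T t,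
            rexp (-lam * (s - T)) • ∫ y, w (t - s + T) y • dK N (s - T) (x - y)) x := by
    rw [hfun]
    exact ((part1 x).1).add ((keyPhi x).const_mul μ)
  rw [Aux13.norm_gradient_eq, hD.fderiv]
  have hlamβ : rexp (-lam * (t - T)) ≤ rexp (-β * (t - T)) :=
    Real.exp_le_exp.mpr (by nlinarith)
  calc ‖(rexp (-lam * (t - T)) • ∫ z, K N (t - T) z • fderiv ℝ ψT (x - z))
        + μ • ∫ s in Set.Ioc T t,
            rexp (-lam * (s - T)) • ∫ y, w (t - s + T) y • dK N (s - T) (x - y)‖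
      ≤ ‖rexp (-lam * (t - T)) • ∫ z, K N (t - T) z • fderiv ℝ ψT (x - z)‖
        + ‖μ • ∫ s in Set.Ioc T t,
            rexp (-lam * (s - T)) • ∫ y, w (t - s + T) y • dK N (s - T) (x - y)‖ :=
        norm_add_le _ _
    _ ≤ rexp (-lam * (t - T)) * G + μ * (rexp (-β * (t - T)) * (C_N * Ctil * C₃)) := by
        apply add_le_add (part1 x).2
        rw [norm_smul μ (∫ s in Set.Ioc T t,
          rexp (-lam * (s - T)) • ∫ y, w (t - s + T) y • dK N (s - T) (x - y)),
          Real.norm_eq_abs, abs_of_pos hμ]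
        exact mul_le_mul_of_nonneg_left (hDPhib x) hμ.le
    _ ≤ rexp (-β * (t - T)) * G + μ * (rexp (-β * (t - T)) * (C_N * Ctil * C₃)) :=
        add_le_add (mul_le_mul_of_nonneg_right hlamβ hG0) le_rfl
    _ = rexp (-β * (t - T)) * (G + μ * Ctil * C_N * C₃) := by ring
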